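/- arXiv:2108.06358 — 4 statements merged into one kernel-verified Lean document; each statement's English description precedes it below -/
import Mathlib

section
/- Let R be a commutative ring, and let E(2,R) be the subgroup of SL(2,R) generated by all upper triangular and all lower triangular matrices of SL(2,R). Then every γ ∈ E(2,R) can be written as γ = W(a₁)·W(a₂)·⋯·W(a_k)·D, where k ≥ 0, a₁,…,a_k ∈ R with a_i ∉ {0, 1, −1} whenever 1 < i < k, and D = [[ω, 0], [0, ω⁻¹]] for some unit ω ∈ Rˣ. -/
open Matrix

/-- The Cohn matrix `W(α) = [[α, 1], [−1, 0]]` as an element of `SL(2,R)`. -/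
def CohnMatrix {R : Type*} [CommRing R] (a : R) : Matrix.SpecialLinearGroup (Fin 2) R :=
  ⟨!![a, 1; -1, 0], by simp [Matrix.det_fin_two_of]⟩

/-- `E(2,R)`: the subgroup of `SL(2,R)` generated by all upper triangular and all lower
triangular matrices. -/
def ElemSubgroup (R : Type*) [CommRing R] : Subgroup (Matrix.SpecialLinearGroup (Fin 2) R) :=
  Subgroup.closure {γ | γ.1 1 0 = 0 ∨ γ.1 0 1 = 0}

namespace CohnAux

variable {R : Type*} [CommRing R]

/-- The diagonal matrix `diag(ω, ω⁻¹)` in `SL(2,R)`. -/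
def Dmat (ω : Rˣ) : Matrix.SpecialLinearGroup (Fin 2) R :=
  ⟨!![(ω : R), 0; 0, ((ω⁻¹ : Rˣ) : R)], by
    simp [Matrix.det_fin_two_of]⟩

lemma idA (x y : R) : CohnMatrix x * (CohnMatrix 0 * CohnMatrix y)
    = CohnMatrix (x + y) * Dmat (-1) := by
  apply Matrix.SpecialLinearGroup.ext
  intro i j
  simp only [Matrix.SpecialLinearGroup.coe_mul]; simp only [CohnMatrix, Dmat]
  fin_cases i <;> fin_cases j <;>
    simp [Matrix.mul_apply, Fin.sum_univ_two] <;> ring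

lemma idB (x y : R) : CohnMatrix x * (CohnMatrix 1 * CohnMatrix y)
    = CohnMatrix (x - 1) * CohnMatrix (y - 1) := by
  apply Matrix.SpecialLinearGroup.ext
  intro i j
  simp only [Matrix.SpecialLinearGroup.coe_mul]; simp only [CohnMatrix]
  fin_cases i <;> fin_cases j <;>
    simp [Matrix.mul_apply, Fin.sum_univ_two] <;> ring

lemma idC (x y : R) : CohnMatrix x * (CohnMatrix (-1) * CohnMatrix y)
    = CohnMatrix (x + 1) * (CohnMatrix (y + 1) * Dmat (-1)) := by
  apply Matrix.SpecialLinearGroup.ext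
  intro i j
  simp only [Matrix.SpecialLinearGroup.coe_mul]; simp only [CohnMatrix, Dmat]
  fin_cases i <;> fin_cases j <;>
    simp [Matrix.mul_apply, Fin.sum_univ_two] <;> ring

lemma Dmat_one : (Dmat 1 : Matrix.SpecialLinearGroup (Fin 2) R) = 1 := by
  apply Matrix.SpecialLinearGroup.ext
  intro i j
  fin_cases i <;> fin_cases j <;> simp [Dmat]

lemma Dmat_mul (a b : Rˣ) :
    (Dmat a * Dmat b : Matrix.SpecialLinearGroup (Fin 2) R) = Dmat (a * b) := by
  apply Matrix.SpecialLinearGroup.ext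
  intro i j
  simp only [Matrix.SpecialLinearGroup.coe_mul]; simp only [Dmat]
  fin_cases i <;> fin_cases j <;>
    simp [Matrix.mul_apply, Fin.sum_univ_two, mul_comm]

lemma Dneg_central (g : Matrix.SpecialLinearGroup (Fin 2) R) :
    g * Dmat (-1) = Dmat (-1) * g := by
  apply Matrix.SpecialLinearGroup.ext
  intro i j
  simp only [Matrix.SpecialLinearGroup.coe_mul]; simp only [Dmat]
  fin_cases i <;> fin_cases j <;>
    simp [Matrix.mul_apply, Fin.sum_univ_two]

lemma tri_decomp (t : Matrix.SpecialLinearGroup (Fin 2) R)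
    (h : t.1 1 0 = 0 ∨ t.1 0 1 = 0) :
    ∃ b₁ b₂ ω, t = CohnMatrix b₁ * CohnMatrix b₂ * Dmat ω := by
  have hdet : t.1 0 0 * t.1 1 1 - t.1 0 1 * t.1 1 0 = 1 := by
    have := t.2
    rwa [Matrix.det_fin_two] at this
  rcases h with h | h
  · have hud : t.1 0 0 * t.1 1 1 = 1 := by linear_combination hdet + t.1 0 1 * h
    refine ⟨-(t.1 0 1) * t.1 0 0, 0,
      ⟨-(t.1 0 0), -(t.1 1 1), by rw [neg_mul_neg]; exact hud,
        by rw [neg_mul_neg, mul_comm]; exact hud⟩, ?_⟩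
    apply Matrix.SpecialLinearGroup.ext
    intro i j
    simp only [Matrix.SpecialLinearGroup.coe_mul]; simp only [CohnMatrix, Dmat]
    fin_cases i <;> fin_cases j <;>
      simp [Matrix.mul_apply, Fin.sum_univ_two, h] <;>
      linear_combination (- t.1 0 1) * hud
  · have hud : t.1 0 0 * t.1 1 1 = 1 := by linear_combination hdet + t.1 1 0 * h
    refine ⟨0, t.1 1 0 * t.1 1 1,
      ⟨-(t.1 0 0), -(t.1 1 1), by rw [neg_mul_neg]; exact hud,
        by rw [neg_mul_neg, mul_comm]; exact hud⟩, ?_⟩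
    apply Matrix.SpecialLinearGroup.ext
    intro i j
    simp only [Matrix.SpecialLinearGroup.coe_mul]; simp only [CohnMatrix, Dmat]
    fin_cases i <;> fin_cases j <;>
      simp [Matrix.mul_apply, Fin.sum_univ_two, h] <;>
      linear_combination (-(t.1 1 0)) * hud

/-- `x` avoids `{0, 1, -1}`. -/
def Ok (x : R) : Prop := x ≠ 0 ∧ x ≠ 1 ∧ x ≠ -1

/-- All elements except the last one are `Ok`. -/
def Mid : List R → Prop
  | [] => True
  | [_] => True
  | x :: y :: L => Ok x ∧ Mid (y :: L)

/-- All elements except the first and the last are `Ok`. -/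
def GoodR : List R → Prop
  | [] => True
  | _ :: L => Mid L

lemma Mid.tail {x : R} {L : List R} (h : Mid (x :: L)) : Mid L := by
  cases L with
  | nil => trivial
  | cons y L => exact h.2

/-- The product `W(lₙ) ⋯ W(l₁)` of Cohn matrices, read right-to-left. -/
def prodR : List R → Matrix.SpecialLinearGroup (Fin 2) R
  | [] => 1
  | a :: L => prodR L * CohnMatrix a

lemma pushR : ∀ (n : ℕ) (L : List R), L.length ≤ n → GoodR L → ∀ b : R,
    ∃ (L' : List R) (s : Rˣ), (s = 1 ∨ s = -1) ∧ GoodR L' ∧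
      L'.length ≤ L.length + 1 ∧
      prodR L * CohnMatrix b = prodR L' * Dmat s := by
  intro n
  induction n with
  | zero =>
    intro L hL _ b
    have : L = [] := List.length_eq_zero_iff.mp (Nat.le_zero.mp hL)
    subst this
    exact ⟨[b], 1, Or.inl rfl, trivial, by simp,
      by simp [prodR, Dmat_one]⟩
  | succ n ih =>
    intro L hL hG b
    match L with
    | [] =>
      exact ⟨[b], 1, Or.inl rfl, trivial, by simp,
        by simp [prodR, Dmat_one]⟩
    | [x] =>
      refine ⟨[b, x], 1, Or.inl rfl, trivial, by simp, ?_⟩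
      simp [prodR, Dmat_one]
    | x :: w :: M =>
      have hGwM : Mid (w :: M) := hG
      have hMidM : Mid M := hGwM.tail
      by_cases hx0 : x = 0
      · subst hx0
        refine ⟨(w + b) :: M, -1, Or.inr rfl, hMidM, by simp, ?_⟩
        show prodR M * CohnMatrix w * CohnMatrix 0 * CohnMatrix b
          = prodR M * CohnMatrix (w + b) * Dmat (-1)
        rw [mul_assoc (prodR M * CohnMatrix w), mul_assoc (prodR M), idA,
          ← mul_assoc]
      · by_cases hx1 : x = 1
        · subst hx1
          have hlen : ((w - 1) :: M).length ≤ n := by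
            simp at hL ⊢; omega
          obtain ⟨L₁, s₁, hs₁, hG₁, hlen₁, hp₁⟩ :=
            ih ((w - 1) :: M) hlen (hMidM) (b - 1)
          refine ⟨L₁, s₁, hs₁, hG₁, ?_, ?_⟩
          · simp at hlen₁ ⊢; omega
          · show prodR M * CohnMatrix w * CohnMatrix 1 * CohnMatrix b
              = prodR L₁ * Dmat s₁
            rw [mul_assoc (prodR M * CohnMatrix w), mul_assoc (prodR M), idB,
              ← mul_assoc]
            exact hp₁
        · by_cases hxm1 : x = -1
          · subst hxm1
            have hlen : ((w + 1) :: M).length ≤ n := by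
              simp at hL ⊢; omega
            obtain ⟨L₁, s₁, hs₁, hG₁, hlen₁, hp₁⟩ :=
              ih ((w + 1) :: M) hlen (hMidM) (b + 1)
            refine ⟨L₁, s₁ * -1, ?_, hG₁, ?_, ?_⟩
            · rcases hs₁ with h | h <;> subst h <;> simp
            · simp at hlen₁ ⊢; omega
            · show prodR M * CohnMatrix w * CohnMatrix (-1) * CohnMatrix b
                = prodR L₁ * Dmat (s₁ * -1)
              rw [mul_assoc (prodR M * CohnMatrix w), mul_assoc (prodR M), idC,
                ← mul_assoc, ← mul_assoc]
              have : prodR M * CohnMatrix (w + 1) * CohnMatrix (b + 1)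
                  = prodR L₁ * Dmat s₁ := hp₁
              rw [this, mul_assoc, Dmat_mul]
          · refine ⟨b :: x :: w :: M, 1, Or.inl rfl,
              ⟨⟨hx0, hx1, hxm1⟩, hGwM⟩, by simp, ?_⟩
            show prodR (x :: w :: M) * CohnMatrix b
              = prodR (x :: w :: M) * CohnMatrix b * Dmat 1
            rw [Dmat_one, mul_one]

lemma Dmat_comm_of_sign {s : Rˣ} (hs : s = 1 ∨ s = -1)
    (g : Matrix.SpecialLinearGroup (Fin 2) R) :
    Dmat s * g = g * Dmat s := by
  rcases hs with h | h <;> subst h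
  · rw [Dmat_one, one_mul, mul_one]
  · exact (Dneg_central g).symm

/-- The decomposition predicate. -/
def HasDecomp (γ : Matrix.SpecialLinearGroup (Fin 2) R) : Prop :=
  ∃ (L : List R) (ω : Rˣ), GoodR L ∧ γ = prodR L * Dmat ω

lemma hasDecomp_one : HasDecomp (1 : Matrix.SpecialLinearGroup (Fin 2) R) :=
  ⟨[], 1, trivial, by simp [prodR, Dmat_one]⟩

lemma hasDecomp_mul_tri {γ t : Matrix.SpecialLinearGroup (Fin 2) R}
    (hγ : HasDecomp γ) (ht : t.1 1 0 = 0 ∨ t.1 0 1 = 0) :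
    HasDecomp (γ * t) := by
  obtain ⟨L, ω, hGL, rfl⟩ := hγ
  -- Dmat ω * t is triangular of the same type
  have htri : (Dmat ω * t).1 1 0 = 0 ∨ (Dmat ω * t).1 0 1 = 0 := by
    rcases ht with h | h
    · left
      simp only [Matrix.SpecialLinearGroup.coe_mul]
      simp [Matrix.SpecialLinearGroup.coe_mul, Dmat, Matrix.mul_apply,
        Fin.sum_univ_two, h]
    · right
      simp only [Matrix.SpecialLinearGroup.coe_mul]
      simp [Matrix.SpecialLinearGroup.coe_mul, Dmat, Matrix.mul_apply,
        Fin.sum_univ_two, h]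
  obtain ⟨b₁, b₂, ω', hdec⟩ := tri_decomp (Dmat ω * t) htri
  obtain ⟨L₁, s₁, hs₁, hG₁, _, hp₁⟩ := pushR L.length L le_rfl hGL b₁
  obtain ⟨L₂, s₂, hs₂, hG₂, _, hp₂⟩ := pushR L₁.length L₁ le_rfl hG₁ b₂
  refine ⟨L₂, s₂ * (s₁ * ω'), hG₂, ?_⟩
  calc prodR L * Dmat ω * t = prodR L * (Dmat ω * t) := by rw [mul_assoc]
    _ = prodR L * (CohnMatrix b₁ * CohnMatrix b₂ * Dmat ω') := by rw [hdec]
    _ = prodR L * CohnMatrix b₁ * CohnMatrix b₂ * Dmat ω' := by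
        rw [← mul_assoc, ← mul_assoc]
    _ = prodR L₁ * Dmat s₁ * CohnMatrix b₂ * Dmat ω' := by rw [hp₁]
    _ = prodR L₁ * CohnMatrix b₂ * Dmat s₁ * Dmat ω' := by
        rw [mul_assoc (prodR L₁), Dmat_comm_of_sign hs₁, ← mul_assoc]
    _ = prodR L₂ * Dmat s₂ * Dmat s₁ * Dmat ω' := by rw [hp₂]
    _ = prodR L₂ * Dmat (s₂ * (s₁ * ω')) := by
        rw [mul_assoc, Dmat_mul, mul_assoc, Dmat_mul]

lemma mid_ok : ∀ (l : List R), Mid l → ∀ j (h : j + 1 < l.length), Ok (l[j]) := by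
  intro l
  induction l with
  | nil => intro _ j h; simp at h
  | cons x l ih =>
    intro hm j h
    match j with
    | 0 =>
      match l with
      | [] => simp at h
      | y :: l' => exact hm.1
    | j + 1 =>
      simp at h
      exact ih hm.tail j (by omega)

end CohnAux

open CohnAux in
/-- Every element of `E(2,R)` is a product `W(a₁) ⋯ W(a_k) · diag(ω, ω⁻¹)` where
`a_i ∉ {0, 1, -1}` whenever `1 < i < k` (1-indexed) and `ω` is a unit. -/
theorem cohn_decomposition {R : Type*} [CommRing R]
    (γ : Matrix.SpecialLinearGroup (Fin 2) R) (hγ : γ ∈ ElemSubgroup R) :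
    ∃ (k : ℕ) (a : Fin k → R) (ω : Rˣ),
      (∀ i : Fin k, 0 < (i : ℕ) → (i : ℕ) < k - 1 →
        a i ≠ 0 ∧ a i ≠ 1 ∧ a i ≠ -1) ∧
      γ = (List.ofFn fun i => CohnMatrix (a i)).prod *
        ⟨!![(ω : R), 0; 0, ((ω⁻¹ : Rˣ) : R)], by
          simp [Matrix.det_fin_two_of, ← Units.val_mul]⟩ := by
  have hdec : HasDecomp γ := by
    refine Subgroup.closure_induction_right hasDecomp_one ?_ ?_ hγ
    · intro x _ y hy hx
      exact hasDecomp_mul_tri hx hy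
    · intro x _ y hy hx
      refine hasDecomp_mul_tri hx ?_
      have hco : (y⁻¹ : Matrix.SpecialLinearGroup (Fin 2) R).1 =
          !![y.1 1 1, -(y.1 0 1); -(y.1 1 0), y.1 0 0] := by
        rw [Matrix.SpecialLinearGroup.coe_inv, Matrix.adjugate_fin_two]
      rcases hy with h | h
      · left; rw [hco]; simp [h]
      · right; rw [hco]; simp [h]
  obtain ⟨L, ω, hGL, hγeq⟩ := hdec
  set M := L.reverse with hM
  refine ⟨M.length, fun i => M[(i : ℕ)], ω, ?_, ?_⟩
  · intro i hi hi'
    have hk : 2 < M.length := by omega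
    have hLne : L ≠ [] := by
      intro h; rw [h] at hM; simp [hM] at hk
    obtain ⟨x, T, rfl⟩ : ∃ x T, L = x :: T := by
      cases L with
      | nil => exact absurd rfl hLne
      | cons a l => exact ⟨a, l, rfl⟩
    have hmid : Mid T := hGL
    have hlen : M.length = T.length + 1 := by simp [hM]
    have hidx : (i : ℕ) < M.length := i.isLt
    -- M[i] = L[len - 1 - i] = T[len - 2 - i]
    have h1 : M[(i : ℕ)] = (x :: T)[(x :: T).length - 1 - (i : ℕ)]'(by
        simp) :=
      List.getElem_reverse _
    obtain ⟨m, hm⟩ : ∃ m, (x :: T).length - 1 - (i : ℕ) = m + 1 :=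
      ⟨(x :: T).length - 2 - (i : ℕ), by simp at hlen ⊢; omega⟩
    have h2 : (x :: T)[(x :: T).length - 1 - (i : ℕ)]'(by simp)
        = T[m]'(by simp at hm ⊢; omega) := by
      simp only [hm]
      exact List.getElem_cons_succ ..
    have hok : Ok (T[m]'(by simp at hm ⊢; omega)) := by
      apply mid_ok T hmid
      simp at hm hlen ⊢
      omega
    show Ok (M[(i : ℕ)])
    rw [h1, h2]
    exact hok
  · have hofn : (List.ofFn fun i => CohnMatrix (M[(i : ℕ)])) =
        M.map CohnMatrix := by
      apply List.ext_getElem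
      · simp
      · intro j h1 h2
        simp [List.getElem_ofFn]
    rw [hofn]
    have hprod : ∀ L : List R, prodR L = (L.reverse.map CohnMatrix).prod := by
      intro L
      induction L with
      | nil => simp [prodR]
      | cons a L ih => simp [prodR, ih]
    rw [hM, ← hprod]
    exact hγeq
end

section
/- Let R be a commutative ring, E(2,R) the subgroup of SL(2,R) generated by all upper and lower triangular matrices of SL(2,R), and 𝒲 the subgroup of SL(2,R) generated by the set of all Cohn matrices {W(α) : α ∈ R}. Then 𝒲 ≤ E(2,R), the index [E(2,R) : 𝒲] is at most the cardinality of the unit group Rˣ, and in particular if Rˣ is finite then 𝒲 is a finite-index subgroup of E(2,R). -/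
open Matrix

/-- `𝒲`: the subgroup of `SL(2,R)` generated by all Cohn matrices `W(α)`, `α ∈ R`. -/
def CohnSubgroup (R : Type*) [CommRing R] : Subgroup (Matrix.SpecialLinearGroup (Fin 2) R) :=
  Subgroup.closure (Set.range (CohnMatrix (R := R)))

section aux
variable {R : Type*} [CommRing R]

/-- upper unipotent -/
def CohnUpp (x : R) : Matrix.SpecialLinearGroup (Fin 2) R :=
  ⟨!![1, x; 0, 1], by simp [Matrix.det_fin_two_of]⟩

/-- lower unipotent -/
def CohnLow (x : R) : Matrix.SpecialLinearGroup (Fin 2) R :=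
  ⟨!![1, 0; x, 1], by simp [Matrix.det_fin_two_of]⟩

lemma cohn_decomp (a : R) : CohnMatrix a = CohnUpp (1 - a) * CohnLow (-1) * CohnUpp 1 := by
  apply Subtype.ext
  erw [Matrix.SpecialLinearGroup.coe_mul, Matrix.SpecialLinearGroup.coe_mul]
  simp only [Matrix.SpecialLinearGroup.coe_mul, CohnMatrix, CohnUpp, CohnLow]
  ext i j
  fin_cases i <;> fin_cases j <;>
    simp [Matrix.mul_apply, Fin.sum_univ_succ]

lemma cohn_le : CohnSubgroup R ≤ ElemSubgroup R := by
  rw [CohnSubgroup, Subgroup.closure_le]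
  rintro _ ⟨a, rfl⟩
  rw [cohn_decomp]
  refine mul_mem (mul_mem ?_ ?_) ?_ <;>
    exact Subgroup.subset_closure (by rw [Set.mem_setOf_eq]; simp [CohnUpp, CohnLow])

lemma W_mem (a : R) : CohnMatrix a ∈ CohnSubgroup R :=
  Subgroup.subset_closure ⟨a, rfl⟩

lemma elem_le : ElemSubgroup R ≤ CohnSubgroup R := by
  rw [ElemSubgroup, Subgroup.closure_le]
  rintro γ (h | h)
  · -- upper triangular: γ 1 0 = 0
    have hdet := γ.2
    rw [Matrix.det_fin_two, h] at hdet
    set a := γ.1 0 0; set b := γ.1 0 1; set d := γ.1 1 1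
    have had : a * d = 1 := by linear_combination hdet
    have key : γ * CohnMatrix 0 = CohnMatrix 0 * CohnMatrix 0 * CohnMatrix a *
        CohnMatrix d * CohnMatrix a * CohnMatrix (-(d*b)) := by
      apply Subtype.ext
      erw [Matrix.SpecialLinearGroup.coe_mul, Matrix.SpecialLinearGroup.coe_mul,
        Matrix.SpecialLinearGroup.coe_mul, Matrix.SpecialLinearGroup.coe_mul,
        Matrix.SpecialLinearGroup.coe_mul, Matrix.SpecialLinearGroup.coe_mul]
      simp only [Matrix.SpecialLinearGroup.coe_mul, CohnMatrix]
      ext i j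
      fin_cases i <;> fin_cases j <;>
        simp [Matrix.mul_apply, Fin.sum_univ_two, h] <;>
        first
          | linear_combination (-(b*(a*d)) + b - 1) * had
          | linear_combination (-a) * had
          | linear_combination (d*b) * had
          | linear_combination (-1 : R) * had
          | exact (show a = (-(a * d) + 1) * a + a by linear_combination a * had)
    have hγ : γ = (CohnMatrix 0 * CohnMatrix 0 * CohnMatrix a *
        CohnMatrix d * CohnMatrix a * CohnMatrix (-(d*b))) * (CohnMatrix 0)⁻¹ :=
      eq_mul_inv_of_mul_eq key
    rw [hγ]
    exact mul_mem (mul_mem (mul_mem (mul_mem (mul_mem (mul_mem (W_mem 0) (W_mem 0)) (W_mem a))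
      (W_mem d)) (W_mem a)) (W_mem _)) (inv_mem (W_mem 0))
  · -- lower triangular: γ 0 1 = 0
    have hdet := γ.2
    rw [Matrix.det_fin_two, h] at hdet
    set a := γ.1 0 0; set c := γ.1 1 0; set d := γ.1 1 1
    have had : a * d = 1 := by linear_combination hdet
    have key : CohnMatrix 0 * γ = CohnMatrix (c*d) * CohnMatrix 0 * CohnMatrix 0 *
        CohnMatrix a * CohnMatrix d * CohnMatrix a := by
      apply Subtype.ext
      erw [Matrix.SpecialLinearGroup.coe_mul, Matrix.SpecialLinearGroup.coe_mul,
        Matrix.SpecialLinearGroup.coe_mul, Matrix.SpecialLinearGroup.coe_mul,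
        Matrix.SpecialLinearGroup.coe_mul, Matrix.SpecialLinearGroup.coe_mul]
      simp only [Matrix.SpecialLinearGroup.coe_mul, CohnMatrix]
      ext i j
      fin_cases i <;> fin_cases j <;>
        simp [Matrix.mul_apply, Fin.sum_univ_two, h] <;>
        first
          | linear_combination (c*(a*d) - c - 1) * had
          | linear_combination (d*c) * had
          | linear_combination a * had
          | linear_combination (-1 : R) * had
          | exact (show -a = (a * d + -1) * a + -a by linear_combination (-a) * had)
    have hγ : γ = (CohnMatrix 0)⁻¹ * (CohnMatrix (c*d) * CohnMatrix 0 * CohnMatrix 0 *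
        CohnMatrix a * CohnMatrix d * CohnMatrix a) := eq_inv_mul_of_mul_eq key
    rw [hγ]
    exact mul_mem (inv_mem (W_mem 0)) (mul_mem (mul_mem (mul_mem (mul_mem (mul_mem (W_mem _)
      (W_mem 0)) (W_mem 0)) (W_mem a)) (W_mem d)) (W_mem a))

lemma cohn_eq_elem : CohnSubgroup R = ElemSubgroup R := le_antisymm cohn_le elem_le

end aux

/-- `𝒲 ≤ E(2,R)`, the index of `𝒲` in `E(2,R)` is at most the cardinality of `Rˣ`
(expressed by an injection of the coset space into `Rˣ`), and in particular if `Rˣ` is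
finite then `𝒲` has finite index in `E(2,R)`. -/
theorem cohnSubgroup_finite_index {R : Type*} [CommRing R] :
    CohnSubgroup R ≤ ElemSubgroup R ∧
    (∃ f : (ElemSubgroup R) ⧸ ((CohnSubgroup R).subgroupOf (ElemSubgroup R)) → Rˣ,
      Function.Injective f) ∧
    (Finite Rˣ → ((CohnSubgroup R).subgroupOf (ElemSubgroup R)).FiniteIndex) := by
  have heq : (CohnSubgroup R).subgroupOf (ElemSubgroup R) = ⊤ := by
    rw [cohn_eq_elem, Subgroup.subgroupOf_self]
  refine ⟨cohn_eq_elem.le, ?_, ?_⟩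
  · rw [heq]
    haveI := QuotientGroup.subsingleton_quotient_top (G := ElemSubgroup R)
    exact ⟨fun _ => 1, fun x y _ => Subsingleton.elim x y⟩
  · intro _
    rw [heq]
    exact ⟨by simp [Subgroup.index_top]⟩
end

section
/- Let x, y, z be elements of the Hamilton quaternions ℍ = Quaternion ℝ that are linearly independent over ℝ. Then there exist u, v ∈ {x, y, z} (not necessarily distinct) such that the product u·v does not lie in the ℝ-linear span of {x, y, z}; equivalently, x, y, z, u·v are linearly independent over ℝ. -/
open Quaternion

set_option maxHeartbeats 1000000 in
/-- If `x, y, z ∈ ℍ` are linearly independent over `ℝ`, then some product `u·v` with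
`u, v ∈ {x, y, z}` lies outside the `ℝ`-span of `{x, y, z}`; equivalently
`x, y, z, u·v` are linearly independent over `ℝ`. -/
theorem exists_product_not_in_span (x y z : ℍ[ℝ])
    (h : LinearIndependent ℝ ![x, y, z]) :
    ∃ u ∈ ({x, y, z} : Set ℍ[ℝ]), ∃ v ∈ ({x, y, z} : Set ℍ[ℝ]),
      u * v ∉ Submodule.span ℝ ({x, y, z} : Set ℍ[ℝ]) ∧
      LinearIndependent ℝ ![x, y, z, u * v] := by
  set S : Set ℍ[ℝ] := {x, y, z} with hS
  set V : Submodule ℝ ℍ[ℝ] := Submodule.span ℝ S with hVdef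
  have hco : ∀ r : ℝ, ((r : ℝ) : ℍ[ℝ]) = r • (1 : ℍ[ℝ]) := fun r => by
    rw [← coe_mul_eq_smul, mul_one]
  have hrange : Set.range ![x, y, z] = S := by
    ext w; simp [hS, Matrix.range_cons, Matrix.range_empty]; tauto
  have hsnoc : ∀ w : ℍ[ℝ], w ∉ V → LinearIndependent ℝ ![x, y, z, w] := by
    intro w hw
    have he : ![x, y, z, w] = Fin.snoc ![x, y, z] w := by funext i; fin_cases i <;> rfl
    rw [he, linearIndependent_fin_snoc]
    exact ⟨h, by rwa [hrange]⟩
  by_contra hcon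
  push_neg at hcon
  have H : ∀ u ∈ S, ∀ v ∈ S, u * v ∈ V := by
    intro u hu v hv
    by_contra hne
    exact hcon u hu v hv hne (hsnoc _ hne)
  have hVmul : ∀ a ∈ V, ∀ b ∈ V, a * b ∈ V := by
    have hle : V * V ≤ V := by
      rw [hVdef, Submodule.span_mul_span, Submodule.span_le]
      rintro _ ⟨u, hu, v, hv, rfl⟩
      exact H u hu v hv
    exact fun a ha b hb => hle (Submodule.mul_mem_mul ha hb)
  have hxV : x ∈ V := Submodule.subset_span (by simp [hS])
  have hx0 : x ≠ 0 := by simpa using h.ne_zero 0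
  have h1V : (1 : ℍ[ℝ]) ∈ V := by
    have hnz : normSq x ≠ 0 := normSq_ne_zero.mpr hx0
    have h1 : x * star x = ((normSq x : ℝ) : ℍ[ℝ]) := self_mul_star x
    have h2 : star x = ((2 * x.re : ℝ) : ℍ[ℝ]) - x := eq_sub_of_add_eq' (self_add_star' x)
    rw [h2, mul_sub, mul_coe_eq_smul, hco] at h1
    have hm : (normSq x) • (1 : ℍ[ℝ]) ∈ V := by
      rw [← h1]
      exact Submodule.sub_mem _ (Submodule.smul_mem _ _ hxV) (hVmul x hxV x hxV)
    have := Submodule.smul_mem V (normSq x)⁻¹ hm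
    rwa [smul_smul, inv_mul_cancel₀ hnz, one_smul] at this
  have hV3 : Module.finrank ℝ V = 3 := by
    rw [hVdef, ← hrange]
    simpa using finrank_span_eq_card h
  -- the pure (zero real part) elements of V
  set W : Submodule ℝ ℍ[ℝ] :=
    V ⊓ LinearMap.ker (QuaternionAlgebra.reₗ (-1 : ℝ) 0 (-1)) with hWdef
  have hsup : V ≤ Submodule.span ℝ {(1 : ℍ[ℝ])} ⊔ W := by
    intro a ha
    rw [Submodule.mem_sup]
    refine ⟨a.re • 1, Submodule.smul_mem _ _ (Submodule.mem_span_singleton_self 1),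
      a - a.re • 1, ⟨Submodule.sub_mem _ ha (Submodule.smul_mem _ _ h1V), ?_⟩, by abel⟩
    change (a - a.re • (1 : ℍ[ℝ])).re = 0
    simp
  have hW2 : 2 ≤ Module.finrank ℝ W := by
    have h1 := Submodule.finrank_mono hsup
    have h2 := Submodule.finrank_add_le_finrank_add_finrank (Submodule.span ℝ {(1 : ℍ[ℝ])}) W
    have h3 : Module.finrank ℝ (Submodule.span ℝ {(1 : ℍ[ℝ])}) = 1 :=
      finrank_span_singleton one_ne_zero
    rw [hV3] at h1
    omega
  obtain ⟨f, hf⟩ := exists_linearIndependent_of_le_finrank hW2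
  set p : ℍ[ℝ] := (f 0 : ℍ[ℝ]) with hp_def
  set q : ℍ[ℝ] := (f 1 : ℍ[ℝ]) with hq_def
  have hpq : LinearIndependent ℝ ![p, q] := by
    have h1 := hf.map' W.subtype (Submodule.ker_subtype W)
    have he : ![p, q] = W.subtype ∘ f := by funext i; fin_cases i <;> rfl
    rwa [he]
  have hpV : p ∈ V := ((Submodule.mem_inf.mp (f 0).2).1)
  have hqV : q ∈ V := ((Submodule.mem_inf.mp (f 1).2).1)
  have hpre : p.re = 0 := by
    have := (Submodule.mem_inf.mp (f 0).2).2
    exact this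
  have hqre : q.re = 0 := by
    have := (Submodule.mem_inf.mp (f 1).2).2
    exact this
  have hp0 : p ≠ 0 := by simpa using hpq.ne_zero 0
  have hsp : star p = -p := star_eq_neg.mpr hpre
  have hsq : star q = -q := star_eq_neg.mpr hqre
  -- 1, p, q are linearly independent, hence span V
  have h1pq : LinearIndependent ℝ ![(1 : ℍ[ℝ]), p, q] := by
    have he : ![(1 : ℍ[ℝ]), p, q] = Fin.cons 1 ![p, q] := by funext i; fin_cases i <;> rfl
    rw [he, linearIndependent_fin_cons]
    refine ⟨hpq, ?_⟩
    have hr : Set.range ![p, q] = {p, q} := by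
      ext w; simp [Matrix.range_cons, Matrix.range_empty]; tauto
    rw [hr]
    intro hmem
    rw [Submodule.mem_span_pair] at hmem
    obtain ⟨a, b, hab⟩ := hmem
    have := congrArg QuaternionAlgebra.re hab
    simp [hpre, hqre] at this
  have hrange2 : Set.range ![(1 : ℍ[ℝ]), p, q] = ({1, p, q} : Set ℍ[ℝ]) := by
    ext w; simp [Matrix.range_cons, Matrix.range_empty]; tauto
  have hle2 : Submodule.span ℝ ({1, p, q} : Set ℍ[ℝ]) ≤ V := by
    rw [Submodule.span_le]
    rintro w hw
    rcases hw with rfl | rfl | rfl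
    · exact h1V
    · exact hpV
    · exact hqV
  have h3r : Module.finrank ℝ (Submodule.span ℝ ({1, p, q} : Set ℍ[ℝ])) = 3 := by
    rw [← hrange2]
    simpa using finrank_span_eq_card h1pq
  have hVeq : Submodule.span ℝ ({1, p, q} : Set ℍ[ℝ]) = V :=
    Submodule.eq_of_le_of_finrank_eq hle2 (by rw [h3r, hV3])
  -- decompose p*q and q*p in the basis 1, p, q
  have hdec : ∀ w : ℍ[ℝ], w ∈ V → ∃ a b c : ℝ, w = a • (1 : ℍ[ℝ]) + (b • p + c • q) := by
    intro w hw
    rw [← hVeq, Submodule.mem_span_insert] at hw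
    obtain ⟨a, u, hu, rfl⟩ := hw
    rw [Submodule.mem_span_pair] at hu
    obtain ⟨b, c, rfl⟩ := hu
    exact ⟨a, b, c, rfl⟩
  obtain ⟨a, b, c, hpqe⟩ := hdec _ (hVmul p hpV q hqV)
  obtain ⟨a', b', c', hqpe⟩ := hdec _ (hVmul q hqV p hpV)
  have hre_eq : a = a' := by
    have h1 : (p * q).re = a := by rw [hpqe]; simp [hpre, hqre]
    have h2 : (q * p).re = a' := by rw [hqpe]; simp [hpre, hqre]
    rw [← h1, ← h2]; simp [re_mul]; ring
  set d : ℍ[ℝ] := p * q - q * p with hd_def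
  have hd : d = (b - b') • p + (c - c') • q := by
    rw [hd_def, hpqe, hqpe, hre_eq]
    module
  -- p and q anticommute with d
  have hppn : p * p = (-(normSq p)) • (1 : ℍ[ℝ]) := by
    have h0 := self_mul_star p
    rw [hsp, mul_neg] at h0
    rw [neg_eq_iff_eq_neg.mp h0, hco, neg_smul]
  have hqqn : q * q = (-(normSq q)) • (1 : ℍ[ℝ]) := by
    have h0 := self_mul_star q
    rw [hsq, mul_neg] at h0
    rw [neg_eq_iff_eq_neg.mp h0, hco, neg_smul]
  have hpd : p * d = -(d * p) := by
    have h1 : p * d + d * p = p * p * q - q * (p * p) := by rw [hd_def]; noncomm_ring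
    rw [hppn, smul_mul_assoc, mul_smul_comm, one_mul, mul_one, sub_self] at h1
    exact eq_neg_of_add_eq_zero_left h1
  have hqd : q * d = -(d * q) := by
    have h1 : q * d + d * q = p * (q * q) - q * q * p := by rw [hd_def]; noncomm_ring
    rw [hqqn, smul_mul_assoc, mul_smul_comm, one_mul, mul_one, sub_self] at h1
    exact eq_neg_of_add_eq_zero_left h1
  have hd0 : d = 0 := by
    have hdd : d * d = -(d * d) := by
      calc d * d = d * ((b - b') • p + (c - c') • q) := by rw [← hd]
        _ = (b - b') • (d * p) + (c - c') • (d * q) := by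
              rw [mul_add, mul_smul_comm, mul_smul_comm]
        _ = (b - b') • (-(p * d)) + (c - c') • (-(q * d)) := by
              rw [show d * p = -(p * d) from by rw [hpd, neg_neg],
                show d * q = -(q * d) from by rw [hqd, neg_neg]]
        _ = -((b - b') • (p * d) + (c - c') • (q * d)) := by
              rw [smul_neg, smul_neg, neg_add]
        _ = -(((b - b') • p + (c - c') • q) * d) := by
              rw [add_mul, smul_mul_assoc, smul_mul_assoc]
        _ = -(d * d) := by rw [← hd]
    have h2 : (2 : ℝ) • (d * d) = 0 := by
      rw [two_smul]
      nth_rewrite 1 [hdd]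
      rw [neg_add_cancel]
    have h3 : d * d = 0 := by
      rcases smul_eq_zero.mp h2 with h | h
      · norm_num at h
      · exact h
    exact mul_self_eq_zero.mp h3
  have hcomm : p * q = q * p := sub_eq_zero.mp hd0
  have hstar : star (p * q) = p * q := by
    rw [star_mul, hsp, hsq, neg_mul_neg, hcomm]
  have hreal : p * q = (((p * q).re : ℝ) : ℍ[ℝ]) := star_eq_self.mp hstar
  have hNp : normSq p ≠ 0 := normSq_ne_zero.mpr hp0
  have key : (normSq p) • q = (-(p * q).re) • p := by
    have h1 : star p * (p * q) = ((normSq p : ℝ) : ℍ[ℝ]) * q := by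
      rw [← mul_assoc, star_mul_self]
    rw [hreal, mul_coe_eq_smul, hsp, coe_mul_eq_smul] at h1
    rw [← h1, smul_neg, neg_smul]
  have hq : ((normSq p)⁻¹ * (-(p * q).re)) • p = q := by
    rw [mul_smul, ← key, smul_smul, inv_mul_cancel₀ hNp, one_smul]
  exact (LinearIndependent.pair_iff' hp0).mp hpq _ hq
end

section
/- There exist constants C > 0 and d₀ ≥ 23 such that for every real number d ≥ d₀ the following holds: let P = {s·(1, 0) + t·(1/2, √d/2) : s, t ∈ [0, 1]} ⊆ ℝ² be the parallelogram spanned by (1, 0) and (1/2, √d/2), and let B be the closed disk of center (1/2, (d−1)/(4√d)) and radius √(d² − 14d + 1)/(4√d). Then the two-dimensional Lebesgue measure of P \ B satisfies vol(P \ B) ≤ √d/2 − √(d(d² − 22d − 7))/(2(d+1)) ≤ 6/√d + C·d^{−3/2}. -/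
open MeasureTheory

private lemma det_toEuclideanLin_two (M : Matrix (Fin 2) (Fin 2) ℝ) :
    LinearMap.det (Matrix.toEuclideanLin M) = M.det := by
  have h : Matrix.toEuclideanLin M =
      ((WithLp.linearEquiv 2 ℝ (Fin 2 → ℝ)).symm.conj (Matrix.toLin' M) :
        EuclideanSpace ℝ (Fin 2) →ₗ[ℝ] EuclideanSpace ℝ (Fin 2)) := rfl
  rw [h, LinearEquiv.conj_apply, LinearMap.comp_assoc, LinearMap.det_conj,
    LinearMap.det_toLin']

set_option maxHeartbeats 1000000 in
/-- There are constants `C > 0` and `d₀ ≥ 23` such that for all `d ≥ d₀`, the area of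
the part of the fundamental parallelogram spanned by `(1,0)` and `(1/2, √d/2)` lying
outside the closed disk of center `(1/2, (d−1)/(4√d))` and radius `√(d²−14d+1)/(4√d)`
is at most `√d/2 − √(d(d²−22d−7))/(2(d+1))`, which is at most `6/√d + C·d^{−3/2}`. -/
theorem area_outside_disk_bound_parallelogram :
    ∃ C : ℝ, 0 < C ∧ ∃ d₀ : ℝ, 23 ≤ d₀ ∧ ∀ d : ℝ, d₀ ≤ d →
      volume ({p : EuclideanSpace ℝ (Fin 2) |
            ∃ s ∈ Set.Icc (0 : ℝ) 1, ∃ t ∈ Set.Icc (0 : ℝ) 1,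
              p = s • (!₂[1, 0] : EuclideanSpace ℝ (Fin 2)) +
                t • (!₂[1 / 2, Real.sqrt d / 2] : EuclideanSpace ℝ (Fin 2))} \
          Metric.closedBall
            (!₂[1 / 2, (d - 1) / (4 * Real.sqrt d)] : EuclideanSpace ℝ (Fin 2))
            (Real.sqrt (d ^ 2 - 14 * d + 1) / (4 * Real.sqrt d)))
        ≤ ENNReal.ofReal
            (Real.sqrt d / 2 - Real.sqrt (d * (d ^ 2 - 22 * d - 7)) / (2 * (d + 1))) ∧
      Real.sqrt d / 2 - Real.sqrt (d * (d ^ 2 - 22 * d - 7)) / (2 * (d + 1))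
        ≤ 6 / Real.sqrt d + C * d ^ (-(3 : ℝ) / 2) := by
  refine ⟨1000, by norm_num, 100, by norm_num, fun d hd => ?_⟩
  have hd0 : (0:ℝ) < d := by linarith
  set e := Real.sqrt d with he_def
  have he : 0 < e := Real.sqrt_pos.2 hd0
  have he2 : e ^ 2 = d := Real.sq_sqrt hd0.le
  set D : ℝ := d ^ 2 - 22 * d - 7 with hD_def
  have hD0 : (0:ℝ) ≤ D := by rw [hD_def]; nlinarith
  set w := Real.sqrt D with hw_def
  have hw0 : 0 ≤ w := Real.sqrt_nonneg _
  have hw2 : w ^ 2 = D := Real.sq_sqrt hD0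
  have hw_low : d - 12 ≤ w := by
    have h := Real.sqrt_le_sqrt (show (d - 12) ^ 2 ≤ D by rw [hD_def]; nlinarith)
    rw [Real.sqrt_sq (by linarith : (0:ℝ) ≤ d - 12)] at h
    exact h
  have hw_hi : w ≤ d - 3 := by
    have h := Real.sqrt_le_sqrt (show D ≤ (d - 3) ^ 2 by rw [hD_def]; nlinarith)
    rw [Real.sqrt_sq (by linarith : (0:ℝ) ≤ d - 3)] at h
    exact h
  set t₁ : ℝ := ((d - 3) - w) / (2 * (d + 1)) with ht₁_def
  set t₂ : ℝ := ((d - 3) + w) / (2 * (d + 1)) with ht₂_def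
  have hd1 : (0:ℝ) < 2 * (d + 1) := by linarith
  have ht₁0 : 0 ≤ t₁ := div_nonneg (by linarith) hd1.le
  have ht₂1 : t₂ ≤ 1 := by rw [ht₂_def, div_le_one hd1]; linarith
  have ht₁₂ : t₁ ≤ t₂ := by
    rw [ht₁_def, ht₂_def]; exact (div_le_div_iff_of_pos_right hd1).2 (by linarith)
  have hdiff : t₂ - t₁ = w / (d + 1) := by
    rw [ht₁_def, ht₂_def]; field_simp; ring
  -- the linear map
  set M : Matrix (Fin 2) (Fin 2) ℝ := !![1, 1/2; 0, e/2] with hM_def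
  set f : EuclideanSpace ℝ (Fin 2) →ₗ[ℝ] EuclideanSpace ℝ (Fin 2) :=
    Matrix.toEuclideanLin M with hf_def
  have hf0 : ∀ x : EuclideanSpace ℝ (Fin 2), f x 0 = x 0 + x 1 * (1/2) := by
    intro x
    simp [hf_def, hM_def, Matrix.toEuclideanLin_apply, Matrix.mulVec, dotProduct,
      Fin.sum_univ_two]
    ring
  have hf1 : ∀ x : EuclideanSpace ℝ (Fin 2), f x 1 = x 1 * (e/2) := by
    intro x
    simp [hf_def, hM_def, Matrix.toEuclideanLin_apply, Matrix.mulVec, dotProduct,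
      Fin.sum_univ_two]
    ring
  have hdet : |LinearMap.det f| = e / 2 := by
    rw [hf_def, det_toEuclideanLin_two, hM_def, Matrix.det_fin_two_of]
    rw [abs_of_nonneg (by linarith : (0:ℝ) ≤ 1 * (e/2) - 1/2 * 0)]
    ring
  -- the geometric core: the slab maps into the ball
  have hball : ∀ x : EuclideanSpace ℝ (Fin 2), x 0 ∈ Set.Icc (0:ℝ) 1 →
      x 1 ∈ Set.Icc t₁ t₂ →
      f x ∈ @Metric.closedBall (EuclideanSpace ℝ (Fin 2))
        (PiLp.instPseudoMetricSpace 2 fun _ => ℝ)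
        !₂[1 / 2, (d - 1) / (4 * e)]
        (Real.sqrt (d ^ 2 - 14 * d + 1) / (4 * e)) := by
    intro x hx0 hx1
    obtain ⟨ha0, ha1⟩ := hx0
    obtain ⟨htl, htr⟩ := hx1
    set a := x 0 with ha_def
    set t := x 1 with ht_def
    have ht0 : 0 ≤ t := le_trans ht₁0 htl
    have h2a : 2 * (d + 1) * t ≤ (d - 3) + w := by
      rw [ht₂_def] at htr
      have := (le_div_iff₀ hd1).1 htr
      linarith
    have h2b : (d - 3) - w ≤ 2 * (d + 1) * t := by
      rw [ht₁_def] at htl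
      have := (div_le_iff₀ hd1).1 htl
      linarith
    have hq : (d + 1) * t ^ 2 - (d - 3) * t + 4 ≤ 0 := by
      nlinarith [mul_nonneg (by linarith : (0:ℝ) ≤ (d - 3) + w - 2 * (d + 1) * t)
        (by linarith : (0:ℝ) ≤ 2 * (d + 1) * t - ((d - 3) - w)), hw2, hD0]
    have hrad : Real.sqrt (d ^ 2 - 14 * d + 1) / (4 * e)
        = Real.sqrt ((d ^ 2 - 14 * d + 1) / (16 * d)) := by
      rw [Real.sqrt_div (by nlinarith : (0:ℝ) ≤ d ^ 2 - 14 * d + 1)]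
      congr 1
      rw [show (16:ℝ) * d = 4 ^ 2 * d by norm_num, Real.sqrt_mul (by norm_num),
        Real.sqrt_sq (by norm_num : (0:ℝ) ≤ 4), ← he_def]
    rw [Metric.mem_closedBall, EuclideanSpace.dist_eq, hrad]
    apply Real.sqrt_le_sqrt
    rw [Fin.sum_univ_two, hf0 x, hf1 x, ← ha_def, ← ht_def,
      show (!₂[1 / 2, (d - 1) / (4 * e)] : EuclideanSpace ℝ (Fin 2)) 0 = 1/2 from rfl,
      show (!₂[1 / 2, (d - 1) / (4 * e)] : EuclideanSpace ℝ (Fin 2)) 1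
        = (d - 1) / (4 * e) from rfl,
      Real.dist_eq, Real.dist_eq, sq_abs, sq_abs]
    have hco : t * (e / 2) - (d - 1) / (4 * e) = (2 * t * d - (d - 1)) / (4 * e) := by
      rw [← he2]; field_simp; ring
    have hb1 : (a + t * (1/2) - 1/2) ^ 2 ≤ ((t + 1) / 2) ^ 2 := by
      have ht1' : t ≤ 1 := le_trans htr ht₂1
      apply sq_le_sq' <;> linarith
    have hsq : (t * (e / 2) - (d - 1) / (4 * e)) ^ 2
        = (2 * t * d - (d - 1)) ^ 2 / (16 * d) := by
      rw [hco, div_pow, show (4 * e) ^ 2 = 16 * d by rw [mul_pow, he2]; norm_num]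
    rw [hsq]
    have hX : 4 * d * (t + 1) ^ 2 + (2 * t * d - (d - 1)) ^ 2 ≤ d ^ 2 - 14 * d + 1 := by
      nlinarith [hq, hd0]
    have hstep : ((t + 1) / 2) ^ 2 + (2 * t * d - (d - 1)) ^ 2 / (16 * d)
        ≤ (d ^ 2 - 14 * d + 1) / (16 * d) := by
      rw [div_pow, show ((2:ℝ)) ^ 2 = 4 by norm_num,
        div_add_div _ _ (by norm_num : (4:ℝ) ≠ 0) (by positivity : (16:ℝ) * d ≠ 0),
        div_le_div_iff₀ (by positivity) (by positivity)]
      nlinarith [mul_le_mul_of_nonneg_left hX (by linarith : (0:ℝ) ≤ 64 * d), hd0]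
    calc (a + t * (1/2) - 1/2) ^ 2 + (2 * t * d - (d - 1)) ^ 2 / (16 * d)
        ≤ ((t + 1) / 2) ^ 2 + (2 * t * d - (d - 1)) ^ 2 / (16 * d) := by linarith
      _ ≤ (d ^ 2 - 14 * d + 1) / (16 * d) := hstep
  -- pi sets
  set A : Set (Fin 2 → ℝ) := Set.univ.pi (fun _ => Set.Icc (0:ℝ) 1) with hA_def
  set A' : Set (Fin 2 → ℝ) :=
    Set.univ.pi ![Set.Icc (0:ℝ) 1, Set.Icc t₁ t₂] with hA'_def
  have hAm : MeasurableSet A := MeasurableSet.univ_pi fun _ => measurableSet_Icc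
  have hA'm : MeasurableSet A' := MeasurableSet.univ_pi fun i => by
    fin_cases i <;> exact measurableSet_Icc
  have hA'A : A' ⊆ A := by
    intro x hx
    rw [Set.mem_univ_pi] at hx ⊢
    intro i
    fin_cases i
    · simpa using hx 0
    · have := hx 1
      simp only [Matrix.cons_val_one, Matrix.head_cons] at this
      exact ⟨le_trans ht₁0 this.1, le_trans this.2 ht₂1⟩
  have hvolA : volume A = 1 := by
    rw [hA_def, volume_pi_pi]
    simp [Real.volume_Icc]
  have hvolA' : volume A' = ENNReal.ofReal (t₂ - t₁) := by
    rw [hA'_def, volume_pi_pi, Fin.prod_univ_two]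
    simp [Real.volume_Icc]
  set φ := (MeasurableEquiv.toLp 2 (Fin 2 → ℝ)).symm with hφ_def
  have hφap : ∀ x : EuclideanSpace ℝ (Fin 2), ∀ i, (φ x) i = x i := fun x i => rfl
  -- main subset inclusion
  have hsub : {p : EuclideanSpace ℝ (Fin 2) |
        ∃ s ∈ Set.Icc (0 : ℝ) 1, ∃ t ∈ Set.Icc (0 : ℝ) 1,
          p = s • (!₂[1, 0] : EuclideanSpace ℝ (Fin 2)) +
            t • (!₂[1 / 2, e / 2] : EuclideanSpace ℝ (Fin 2))} \
      @Metric.closedBall (EuclideanSpace ℝ (Fin 2))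
        (PiLp.instPseudoMetricSpace 2 fun _ => ℝ)
        !₂[1 / 2, (d - 1) / (4 * e)]
        (Real.sqrt (d ^ 2 - 14 * d + 1) / (4 * e))
      ⊆ f '' (φ ⁻¹' (A \ A')) := by
    rintro p ⟨⟨σ, hσ, τ, hτ, rfl⟩, hpB⟩
    set x : EuclideanSpace ℝ (Fin 2) := (WithLp.equiv 2 (Fin 2 → ℝ)).symm ![σ, τ]
      with hx_def
    have hx0 : x 0 = σ := rfl
    have hx1 : x 1 = τ := rfl
    have hfx : f x = σ • (!₂[1, 0] : EuclideanSpace ℝ (Fin 2)) +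
        τ • (!₂[1 / 2, e / 2] : EuclideanSpace ℝ (Fin 2)) := by
      apply PiLp.ext
      intro i
      fin_cases i
      · rw [show ((⟨0, by norm_num⟩ : Fin 2)) = (0 : Fin 2) from rfl, hf0 x, hx0, hx1]
        simp [PiLp.add_apply, PiLp.smul_apply]
        try ring
      · rw [show ((⟨1, by norm_num⟩ : Fin 2)) = (1 : Fin 2) from rfl, hf1 x, hx1]
        simp [PiLp.add_apply, PiLp.smul_apply]
        try ring
    refine ⟨x, ?_, hfx⟩
    rw [Set.mem_preimage]
    constructor
    · rw [hA_def, Set.mem_univ_pi]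
      intro i
      fin_cases i
      · exact hσ
      · exact hτ
    · intro hmem
      rw [hA'_def, Set.mem_univ_pi] at hmem
      apply hpB
      rw [← hfx]
      exact hball x (hmem 0) (hmem 1)
  -- volume computation
  have hvol_diff : volume (φ ⁻¹' (A \ A')) = 1 - ENNReal.ofReal (t₂ - t₁) := by
    rw [(EuclideanSpace.volume_preserving_symm_measurableEquiv_toLp (Fin 2)).measure_preimage
      ((hAm.diff hA'm).nullMeasurableSet)]
    rw [measure_diff hA'A hA'm.nullMeasurableSet
      (by rw [hvolA']; exact ENNReal.ofReal_ne_top), hvolA, hvolA']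
  have himg : volume (f '' (φ ⁻¹' (A \ A')))
      = ENNReal.ofReal (e / 2) * (1 - ENNReal.ofReal (t₂ - t₁)) := by
    rw [Measure.addHaar_image_linearMap, hdet, hvol_diff]
  have hreal_eq : e / 2 * (1 - (t₂ - t₁))
      = e / 2 - Real.sqrt (d * D) / (2 * (d + 1)) := by
    rw [Real.sqrt_mul hd0.le, ← hw_def, ← he_def, hdiff]
    field_simp
  constructor
  · refine le_trans (measure_mono hsub) ?_
    rw [himg, ← ENNReal.ofReal_one,
      ← ENNReal.ofReal_sub _ (by linarith : (0:ℝ) ≤ t₂ - t₁),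
      ← ENNReal.ofReal_mul (by positivity : (0:ℝ) ≤ e / 2)]
    exact ENNReal.ofReal_le_ofReal (le_of_eq hreal_eq)
  · -- analytic bound
    have hrpow : d ^ (-(3:ℝ) / 2) = 1 / (d * e) := by
      rw [show -(3:ℝ) / 2 = -((3:ℝ)/2) by norm_num, Real.rpow_neg hd0.le,
        show (3:ℝ)/2 = 1 + 1/2 by norm_num, Real.rpow_add hd0, Real.rpow_one,
        ← Real.sqrt_eq_rpow, ← he_def, one_div]
    rw [Real.sqrt_mul hd0.le, ← hw_def, ← he_def, hrpow]
    have hlhs : e / 2 - e * w / (2 * (d + 1)) = e * ((d + 1) - w) / (2 * (d + 1)) := by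
      field_simp
    have hrhs : 6 / e + 1000 * (1 / (d * e)) = (6 * d + 1000) / (d * e) := by
      field_simp
    rw [hlhs, hrhs, div_le_div_iff₀ (by positivity) (by positivity)]
    have hkey2 : ((d + 1) - w) * (2 * d - 11) ≤ 24 * d + 8 := by
      nlinarith [mul_nonneg (by linarith : (0:ℝ) ≤ (d + 1) - w)
        (by linarith : (0:ℝ) ≤ w - (d - 12)), hw2]
    have hid : e * ((d + 1) - w) * (d * e) = d ^ 2 * ((d + 1) - w) := by
      linear_combination (d * ((d + 1) - w)) * he2
    rw [hid]
    nlinarith [mul_le_mul_of_nonneg_left hkey2 (by positivity : (0:ℝ) ≤ d ^ 2), hd,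
      mul_nonneg (mul_nonneg hd0.le hd0.le) hd0.le]
end
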